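/- arXiv:2305.17757 — 3 statements merged into one kernel-verified Lean document; each statement's English description precedes it below -/
import Mathlib

section
/- Every diversity-seeking jump game on a tree topology with exactly one empty node and no stubborn agents admits a pure Nash equilibrium assignment. -/
open Finset

variable {V τ : Type}

open Classical in
noncomputable def occNbrs [Fintype V] (G : SimpleGraph V) (C : V → Option τ) (v : V) :
    Finset V :=
  Finset.univ.filter (fun u => G.Adj v u ∧ (C u).isSome)

open Classical in
noncomputable def diffNbrs [Fintype V] (G : SimpleGraph V) (C : V → Option τ) (v : V)
    (t : τ) : Finset V :=
  Finset.univ.filter (fun u => G.Adj v u ∧ ∃ s, C u = some s ∧ s ≠ t)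

/-- Utility of the agent at node `v`: fraction of occupied neighbors of different type. -/
noncomputable def util [Fintype V] (G : SimpleGraph V) (C : V → Option τ) (v : V) : ℚ :=
  match C v with
  | none => 0
  | some t =>
      if (occNbrs G C v).card = 0 then 0
      else ((diffNbrs G C v t).card : ℚ) / ((occNbrs G C v).card : ℚ)

/-- The assignment after the agent at `u` jumps to node `w`. -/
def move [DecidableEq V] (C : V → Option τ) (u w : V) : V → Option τ :=
  fun x => if x = w then C u else if x = u then none else C x

/-- An improving move: the agent at `u` jumps to the empty node `w`, strictly increasing
its utility. -/
def Improves [Fintype V] [DecidableEq V] (G : SimpleGraph V) (C : V → Option τ)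
    (u w : V) : Prop :=
  (C u).isSome ∧ C w = none ∧ util G C u < util G (move C u w) w

/-- Pure Nash equilibrium: no agent can strictly improve by jumping to an empty node. -/
def IsEquil [Fintype V] [DecidableEq V] (G : SimpleGraph V) (C : V → Option τ) : Prop :=
  ∀ u w : V, (C u).isSome → C w = none → util G (move C u w) w ≤ util G C u

/-- Social welfare: sum of agents' utilities. -/
noncomputable def SW [Fintype V] (G : SimpleGraph V) (C : V → Option τ) : ℚ :=
  ∑ v, util G C v

open Classical in
noncomputable def pw (C : V → Option τ) (m : ℚ) (u v : V) : ℚ :=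
  if (C u).isNone ∨ (C v).isNone then m
  else if C u = C v then 1 else 0

open Classical in
/-- The potential function: sum over edges, weight 1 for same-type endpoints,
`m` if an endpoint is unoccupied, 0 for different-type endpoints. -/
noncomputable def potential [Fintype V] (G : SimpleGraph V) (C : V → Option τ)
    (m : ℚ) : ℚ :=
  (∑ p : V × V, if G.Adj p.1 p.2 then pw C m p.1 p.2 else 0) / 2

open Classical in
noncomputable def countType [Fintype V] (C : V → Option τ) (t : τ) : ℕ :=
  (Finset.univ.filter (fun v => C v = some t)).card

open Classical in
noncomputable def emptyCount [Fintype V] (C : V → Option τ) : ℕ :=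
  (Finset.univ.filter (fun v => C v = none)).card


section TreeLemmas

open SimpleGraph

variable [Fintype V] [DecidableEq V] {G : SimpleGraph V}

omit [Fintype V] in
lemma end_of_mem_support {r z y : V} (p : G.Walk r z) (hmem : y ∈ p.support)
    (hle : p.length ≤ G.dist r y) : y = z := by
  have h1 : (p.takeUntil y hmem).length ≤ p.length := SimpleGraph.Walk.length_takeUntil_le p hmem
  have h2 : G.dist r y ≤ (p.takeUntil y hmem).length := SimpleGraph.dist_le _
  have h3 := congrArg SimpleGraph.Walk.length (p.take_spec hmem)
  rw [SimpleGraph.Walk.length_append] at h3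
  have h4 : (p.dropUntil y hmem).length = 0 := by omega
  exact SimpleGraph.Walk.eq_of_length_eq_zero h4

omit [Fintype V] [DecidableEq V] in
lemma concat_path {r u v : V} (h : G.Adj u v) (p : G.Walk r u) (hp : p.IsPath)
    (hvs : v ∉ p.support) : (p.concat h).IsPath := by
  rw [SimpleGraph.Walk.isPath_def, SimpleGraph.Walk.support_concat,
    List.nodup_append]
  exact ⟨hp.support_nodup, by simp, fun a ha b hb hab => hvs (by
    rw [List.mem_singleton] at hb; rw [← hb, ← hab]; exact ha)⟩

lemma dist_ne_of_adj (hconn : G.Connected) (hac : G.IsAcyclic) (r : V) {u v : V}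
    (h : G.Adj u v) : G.dist r u ≠ G.dist r v := by
  intro he
  obtain ⟨p, hp, hpl⟩ := hconn.exists_path_of_dist r u
  obtain ⟨q, hq, hql⟩ := hconn.exists_path_of_dist r v
  have hvs : v ∉ p.support := by
    intro hvs
    exact h.ne' (end_of_mem_support p hvs (by omega))
  have hp' : (p.concat h).IsPath := concat_path h p hp hvs
  have heq : (⟨p.concat h, hp'⟩ : G.Path r v) = ⟨q, hq⟩ := hac.path_unique _ _
  rw [Subtype.ext_iff] at heq
  have hlen : (p.concat h).length = q.length := congrArg SimpleGraph.Walk.length heq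
  rw [SimpleGraph.Walk.length_concat] at hlen
  omega

lemma parity_ne_of_adj (hconn : G.Connected) (hac : G.IsAcyclic) (r : V) {u v : V}
    (h : G.Adj u v) : Even (G.dist r u) ↔ ¬ Even (G.dist r v) := by
  have h1 : G.dist r u ≠ G.dist r v := dist_ne_of_adj hconn hac r h
  have h2 : G.dist r v ≤ G.dist r u + 1 := by
    have := hconn.dist_triangle (u := r) (v := u) (w := v)
    rwa [SimpleGraph.dist_eq_one_iff_adj.2 h] at this
  have h3 : G.dist r u ≤ G.dist r v + 1 := by
    have := hconn.dist_triangle (u := r) (v := v) (w := u)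
    rwa [SimpleGraph.dist_eq_one_iff_adj.2 h.symm] at this
  rw [Nat.even_iff, Nat.even_iff]
  omega

omit [Fintype V] [DecidableEq V] in
lemma exists_adj (hconn : G.Connected) {u v : V} (huv : u ≠ v) : ∃ y, G.Adj u y := by
  obtain ⟨p, hp, hpl⟩ := hconn.exists_path_of_dist u v
  have hpnil : ¬ p.Nil := by
    intro hnil
    rw [SimpleGraph.Walk.nil_iff_length_eq] at hnil
    have : 0 < G.dist u v := hconn.pos_dist_of_ne huv
    omega
  exact ⟨p.getVert 1, SimpleGraph.Walk.adj_snd hpnil⟩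

lemma exists_leaf (hconn : G.Connected) (hac : G.IsAcyclic) (hV : 1 < Fintype.card V) :
    ∃ w x : V, G.Adj x w ∧ ∀ y, G.Adj y w → y = x := by
  classical
  have hne : Nonempty V := Fintype.card_pos_iff.mp (by omega)
  obtain ⟨r⟩ := hne
  obtain ⟨w, -, hwmax⟩ := Finset.exists_max_image Finset.univ (fun v => G.dist r v)
    ⟨r, Finset.mem_univ r⟩
  have hrw : w ≠ r := by
    obtain ⟨v, hvr⟩ := Fintype.exists_ne_of_one_lt_card hV r
    intro hwr
    have h1 : 0 < G.dist r v := hconn.pos_dist_of_ne (Ne.symm hvr)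
    have := hwmax v (Finset.mem_univ v)
    rw [hwr, SimpleGraph.dist_self] at this
    omega
  set d := G.dist r w with hd
  have hdpos : 0 < d := hconn.pos_dist_of_ne (Ne.symm hrw)
  have hnb : ∀ y, G.Adj y w → G.dist r y = d - 1 := by
    intro y hy
    have h1 : G.dist r y ≠ d := dist_ne_of_adj hconn hac r hy
    have h2 : G.dist r y ≤ d := hwmax y (Finset.mem_univ y)
    have h3 : d ≤ G.dist r y + 1 := by
      have := hconn.dist_triangle (u := r) (v := y) (w := w)
      rwa [SimpleGraph.dist_eq_one_iff_adj.2 hy] at this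
    omega
  have key : ∀ y z, G.Adj y w → G.Adj z w → y = z := by
    intro y z hy hz
    obtain ⟨py, hpy, hpyl⟩ := hconn.exists_path_of_dist r y
    obtain ⟨pz, hpz, hpzl⟩ := hconn.exists_path_of_dist r z
    have hy1 : G.dist r y = d - 1 := hnb y hy
    have hz1 : G.dist r z = d - 1 := hnb z hz
    have hws : ∀ {c : V} (q : G.Walk r c), G.dist r c = d - 1 → q.length = d - 1 →
        w ∉ q.support := by
      intro c q hc hql hws
      have := end_of_mem_support q hws (by omega)
      subst this
      omega
    have hy2 : (py.concat hy).IsPath :=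
      concat_path hy py hpy (hws py hy1 (by omega))
    have hz2 : (pz.concat hz).IsPath :=
      concat_path hz pz hpz (hws pz hz1 (by omega))
    have heq : (⟨py.concat hy, hy2⟩ : G.Path r w) = ⟨pz.concat hz, hz2⟩ :=
      hac.path_unique _ _
    rw [Subtype.ext_iff] at heq
    have heqw : py.concat hy = pz.concat hz := heq
    have hmem : y ∈ (pz.concat hz).support := by
      rw [← heqw]
      rw [SimpleGraph.Walk.support_concat]
      exact List.mem_append_left _ (SimpleGraph.Walk.end_mem_support py)
    rw [SimpleGraph.Walk.support_concat, List.mem_append] at hmem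
    rcases hmem with hmem | hmem
    · exact end_of_mem_support pz hmem (by omega)
    · simp only [List.mem_singleton] at hmem
      exact absurd (hmem ▸ hy) (SimpleGraph.irrefl G)
  obtain ⟨p, hp, hpl⟩ := hconn.exists_path_of_dist r w
  have hrnil : ¬ p.reverse.Nil := by
    intro hnil
    rw [SimpleGraph.Walk.nil_iff_length_eq, SimpleGraph.Walk.length_reverse] at hnil
    omega
  have hadj : G.Adj w (p.reverse.getVert 1) := SimpleGraph.Walk.adj_snd hrnil
  exact ⟨w, p.reverse.getVert 1, hadj.symm, fun y hy => key y _ hy hadj.symm⟩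

end TreeLemmas

section CombLemmas

lemma exists_subsum [DecidableEq τ] (f : τ → ℕ) (M : ℕ) (F : Finset τ)
    (hF : ∀ s ∈ F, f s ≤ M) (T : ℕ) :
    ∃ S ⊆ F, (∑ s ∈ S, f s) ≤ T ∧ (T + 1 ≤ (∑ s ∈ S, f s) + M ∨ S = F) := by
  classical
  induction F using Finset.induction_on with
  | empty => exact ⟨∅, Finset.Subset.refl _, by simp, Or.inr rfl⟩
  | @insert a F ha ih =>
    obtain ⟨S, hS, h1, h2⟩ := ih (fun s hs => hF s (Finset.mem_insert_of_mem hs))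
    rcases h2 with h2 | h2
    · exact ⟨S, hS.trans (Finset.subset_insert a F), h1, Or.inl h2⟩
    · have haS : a ∉ S := fun h => ha (h2 ▸ h)
      by_cases hT : T + 1 ≤ (∑ s ∈ S, f s) + M
      · exact ⟨S, hS.trans (Finset.subset_insert a F), h1, Or.inl hT⟩
      · have hsub : insert a S ⊆ insert a F := by rw [h2]
        refine ⟨insert a S, hsub, ?_, Or.inr (by rw [h2])⟩
        rw [Finset.sum_insert haS]
        have := hF a (Finset.mem_insert_self a F)
        omega

lemma exists_partition [DecidableEq τ] [DecidableEq V] (g : τ → ℕ) (F : Finset τ) :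
    ∀ (Y : Finset V), (∑ s ∈ F, g s) = Y.card →
    ∃ P : τ → Finset V, (∀ s, P s ⊆ Y) ∧ (∀ s, s ∉ F → P s = ∅) ∧
      (∀ s ∈ F, (P s).card = g s) ∧ (∀ s s', s ≠ s' → Disjoint (P s) (P s')) ∧
      (∀ y ∈ Y, ∃ s, y ∈ P s) := by
  classical
  induction F using Finset.induction_on with
  | empty =>
    intro Y hY
    simp only [Finset.sum_empty] at hY
    have : Y = ∅ := by
      rw [← Finset.card_eq_zero]; omega
    subst this
    exact ⟨fun _ => ∅, by simp, by simp, by simp, by simp, by simp⟩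
  | @insert a F ha ih =>
    intro Y hY
    rw [Finset.sum_insert ha] at hY
    obtain ⟨W, hWY, hWc⟩ := Finset.exists_subset_card_eq (s := Y) (n := g a) (by omega)
    have hrest : (∑ s ∈ F, g s) = (Y \ W).card := by
      rw [Finset.card_sdiff_of_subset hWY]; omega
    obtain ⟨P, hP1, hP2, hP3, hP4, hP5⟩ := ih (Y \ W) hrest
    refine ⟨fun s => if s = a then W else P s, ?_, ?_, ?_, ?_, ?_⟩
    · intro s
      by_cases h : s = a
      · simpa [h] using hWY
      · simp only [if_neg h]
        exact (hP1 s).trans (Finset.sdiff_subset)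
    · intro s hs
      have hsa : s ≠ a := fun h => hs (h ▸ Finset.mem_insert_self a F)
      simp only [if_neg hsa]
      exact hP2 s (fun h => hs (Finset.mem_insert_of_mem h))
    · intro s hs
      by_cases h : s = a
      · simp [h, hWc]
      · simp only [if_neg h]
        exact hP3 s ((Finset.mem_insert.mp hs).resolve_left h)
    · intro s s' hss
      by_cases h : s = a
      · subst h
        simp only [if_pos rfl, if_neg (Ne.symm hss)]
        exact Finset.disjoint_left.mpr fun y hy hy' =>
          (Finset.mem_sdiff.mp (hP1 s' hy')).2 hy
      · by_cases h' : s' = a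
        · subst h'
          simp only [if_neg h, if_pos rfl]
          exact Finset.disjoint_left.mpr fun y hy hy' =>
            (Finset.mem_sdiff.mp (hP1 s hy)).2 hy'
        · simp only [if_neg h, if_neg h']
          exact hP4 s s' hss
    · intro y hy
      by_cases h : y ∈ W
      · exact ⟨a, by simp [h]⟩
      · obtain ⟨s, hs⟩ := hP5 y (Finset.mem_sdiff.mpr ⟨hy, h⟩)
        by_cases hsa : s = a
        · subst hsa
          rw [hP2 s ha] at hs
          exact absurd hs (Finset.notMem_empty y)
        · exact ⟨s, by simpa [hsa] using hs⟩

end CombLemmas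

section UtilLemmas

variable [Fintype V]

lemma util_nonneg (G : SimpleGraph V) (C : V → Option τ) (v : V) : 0 ≤ util G C v := by
  unfold util
  split
  · exact le_refl 0
  · split
    · exact le_refl 0
    · positivity

lemma diffNbrs_subset (G : SimpleGraph V) (C : V → Option τ) (v : V) (t : τ) :
    diffNbrs G C v t ⊆ occNbrs G C v := by
  intro y hy
  classical
  simp only [diffNbrs, Finset.mem_filter] at hy
  simp only [occNbrs, Finset.mem_filter]
  obtain ⟨h1, h2, s, hs, _⟩ := hy
  exact ⟨h1, h2, by rw [hs]; rfl⟩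

lemma util_le_one (G : SimpleGraph V) (C : V → Option τ) (v : V) : util G C v ≤ 1 := by
  unfold util
  split
  · exact zero_le_one
  · split
    · exact zero_le_one
    · rename_i t _ hcard
      have hpos : 0 < ((occNbrs G C v).card : ℚ) := by
        exact_mod_cast Nat.pos_of_ne_zero hcard
      rw [div_le_one hpos]
      exact_mod_cast Finset.card_le_card (diffNbrs_subset G C v t)

end UtilLemmas

section UtilLemmas2

variable [Fintype V]

lemma util_none (G : SimpleGraph V) (C : V → Option τ) (v : V) (h : C v = none) :
    util G C v = 0 := by
  unfold util
  rw [h]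

lemma util_some (G : SimpleGraph V) (C : V → Option τ) (v : V) (s : τ) (h : C v = some s) :
    util G C v = if (occNbrs G C v).card = 0 then 0
      else ((diffNbrs G C v s).card : ℚ) / ((occNbrs G C v).card : ℚ) := by
  unfold util
  rw [h]

end UtilLemmas2

/-- Every diversity-seeking jump game on a tree with exactly one empty node
and no stubborn agents admits a pure Nash equilibrium. -/
theorem stmt3 {V τ : Type} [Fintype V] [DecidableEq V] [Fintype τ]
    (G : SimpleGraph V) (hconn : G.Connected) (hac : G.IsAcyclic)
    (hk : 2 ≤ Fintype.card τ)
    (cnt : τ → ℕ) (hcard : (∑ t, cnt t) + 1 = Fintype.card V) :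
    ∃ C : V → Option τ, (∀ t, countType C t = cnt t) ∧ IsEquil G C := by
  classical
  by_cases hN0 : (∑ t, cnt t) = 0
  · refine ⟨fun _ => none, ?_, ?_⟩
    · intro t
      have ht : cnt t = 0 := by
        by_contra h
        have : 0 < ∑ t, cnt t :=
          Finset.sum_pos' (fun _ _ => Nat.zero_le _)
            ⟨t, Finset.mem_univ t, Nat.pos_of_ne_zero h⟩
        omega
      simp [countType, ht]
    · intro u w hu _
      simp at hu
  -- main case
  set N := ∑ t, cnt t with hNdef
  have hV2 : 1 < Fintype.card V := by omega
  obtain ⟨w, x, hxw, huniq⟩ := exists_leaf hconn hac hV2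
  have hxwne : x ≠ w := hxw.ne
  set A : Finset V := Finset.univ.filter (fun v => v ≠ w ∧ Even (G.dist x v)) with hAdef
  set B : Finset V := Finset.univ.filter (fun v => v ≠ w ∧ ¬ Even (G.dist x v)) with hBdef
  have hxA : x ∈ A := by
    simp [hAdef, hxwne, SimpleGraph.dist_self]
  have hAindep : ∀ u v, u ∈ A → v ∈ A → ¬ G.Adj u v := by
    intro u v hu hv hadj
    rw [hAdef, Finset.mem_filter] at hu hv
    exact ((parity_ne_of_adj hconn hac x hadj).mp hu.2.2) hv.2.2
  have hBindep : ∀ u v, u ∈ B → v ∈ B → ¬ G.Adj u v := by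
    intro u v hu hv hadj
    rw [hBdef, Finset.mem_filter] at hu hv
    exact hu.2.2 ((parity_ne_of_adj hconn hac x hadj).mpr hv.2.2)
  have hAB : Disjoint A B := by
    rw [Finset.disjoint_left]
    intro v hv hv'
    rw [hAdef, Finset.mem_filter] at hv
    rw [hBdef, Finset.mem_filter] at hv'
    exact hv'.2.2 hv.2.2
  have hwA : w ∉ A := by simp [hAdef]
  have hwB : w ∉ B := by simp [hBdef]
  have hABunion : A ∪ B = Finset.univ.erase w := by
    ext v
    simp only [hAdef, hBdef, Finset.mem_union, Finset.mem_filter, Finset.mem_univ,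
      true_and, Finset.mem_erase]
    tauto
  have hABcard : A.card + B.card = N := by
    have := Finset.card_union_of_disjoint hAB
    rw [hABunion, Finset.card_erase_of_mem (Finset.mem_univ w), Finset.card_univ] at this
    omega
  set a := A.card with hadef
  set b := B.card with hbdef
  have ha1 : 1 ≤ a := Finset.card_pos.mpr ⟨x, hxA⟩
  have hτne : Nonempty τ := Fintype.card_pos_iff.mp (by omega)
  obtain ⟨t, -, htmax⟩ := Finset.exists_max_image Finset.univ cnt
    ⟨Classical.arbitrary τ, Finset.mem_univ _⟩
  have htmax' : ∀ s, cnt s ≤ cnt t := fun s => htmax s (Finset.mem_univ s)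
  have htpos : 1 ≤ cnt t := by
    by_contra h
    have : ∀ s ∈ Finset.univ, cnt s = 0 := fun s _ => by have := htmax' s; omega
    exact hN0 (Finset.sum_eq_zero this)
  obtain ⟨S, hSF, hS1, hS2⟩ := exists_subsum cnt (cnt t) (Finset.univ.erase t)
    (fun s _ => htmax' s) (a - 1)
  set sS := ∑ s ∈ S, cnt s with hsSdef
  have htS : t ∉ S := fun h => (Finset.mem_erase.mp (hSF h)).1 rfl
  have hsum_erase : (∑ s ∈ Finset.univ.erase t, cnt s) + cnt t = N := by
    rw [hNdef]
    exact Finset.sum_erase_add Finset.univ cnt (Finset.mem_univ t)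
  have hSsum : sS ≤ ∑ s ∈ Finset.univ.erase t, cnt s :=
    Finset.sum_le_sum_of_subset hSF
  have key1 : sS + 1 ≤ a := by omega
  have key2 : a ≤ sS + cnt t := by
    rcases hS2 with h | h
    · omega
    · have : sS = ∑ s ∈ Finset.univ.erase t, cnt s := by rw [hsSdef, h]
      omega
  -- partition of A.erase x according to gA
  set gA : τ → ℕ := fun s => if s = t then a - 1 - sS else if s ∈ S then cnt s else 0
    with hgAdef
  have hgAsum : (∑ s, gA s) = (A.erase x).card := by
    rw [Finset.card_erase_of_mem hxA]
    rw [← Finset.sum_erase_add Finset.univ gA (Finset.mem_univ t)]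
    have h1 : ∑ s ∈ Finset.univ.erase t, gA s = sS := by
      have hc : ∀ s ∈ Finset.univ.erase t, gA s = if s ∈ S then cnt s else 0 := by
        intro s hs
        simp [hgAdef, (Finset.mem_erase.mp hs).1]
      rw [Finset.sum_congr rfl hc, Finset.sum_ite_mem, Finset.inter_eq_right.mpr hSF]
    rw [h1]
    have h2 : gA t = a - 1 - sS := by simp [hgAdef]
    rw [h2]
    omega
  obtain ⟨PA, hPA1, hPA2, hPA3, hPA4, hPA5⟩ :=
    exists_partition gA Finset.univ (A.erase x) hgAsum
  have hPA3' : ∀ s, (PA s).card = gA s := fun s => hPA3 s (Finset.mem_univ s)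
  -- partition of B according to gB
  set gB : τ → ℕ := fun s => if s = t then sS + cnt t - a else if s ∈ S then 0 else cnt s
    with hgBdef
  have hgBsum : (∑ s, gB s) = B.card := by
    rw [← Finset.sum_erase_add Finset.univ gB (Finset.mem_univ t)]
    have h1 : (∑ s ∈ Finset.univ.erase t, gB s) + sS = ∑ s ∈ Finset.univ.erase t, cnt s := by
      have hc : ∀ s ∈ Finset.univ.erase t, gB s = if s ∈ S then 0 else cnt s := by
        intro s hs
        simp [hgBdef, (Finset.mem_erase.mp hs).1]
      rw [Finset.sum_congr rfl hc]
      rw [hsSdef, ← Finset.inter_eq_right.mpr hSF, ← Finset.sum_ite_mem]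
      rw [← Finset.sum_add_distrib]
      apply Finset.sum_congr rfl
      intro s hs
      by_cases h : s ∈ S <;> simp [h, (Finset.mem_erase.mp hs).1]
    have h2 : gB t = sS + cnt t - a := by simp [hgBdef]
    rw [h2]
    omega
  obtain ⟨PB, hPB1, hPB2, hPB3, hPB4, hPB5⟩ :=
    exists_partition gB Finset.univ B hgBsum
  have hPB3' : ∀ s, (PB s).card = gB s := fun s => hPB3 s (Finset.mem_univ s)
  -- the combined parts
  set Q : τ → Finset V := fun s => (if s = t then {x} else ∅) ∪ PA s ∪ PB s with hQdef
  have hPAx : ∀ s, x ∉ PA s := fun s hx => (Finset.mem_erase.mp (hPA1 s hx)).1 rfl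
  have hPBx : ∀ s, x ∉ PB s := fun s hx => Finset.disjoint_left.mp hAB hxA (hPB1 s hx)
  have hPAB : ∀ s s', Disjoint (PA s) (PB s') := by
    intro s s'
    rw [Finset.disjoint_left]
    intro y hy hy'
    exact Finset.disjoint_left.mp hAB (Finset.mem_of_mem_erase (hPA1 s hy)) (hPB1 s' hy')
  have hQw : ∀ s, w ∉ Q s := by
    intro s hw
    rw [hQdef] at hw
    simp only [Finset.mem_union] at hw
    rcases hw with (hw | hw) | hw
    · split at hw
      · exact hxwne (Finset.mem_singleton.mp hw).symm
      · exact absurd hw (Finset.notMem_empty w)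
    · exact hwA (Finset.mem_of_mem_erase (hPA1 s hw))
    · exact hwB (hPB1 s hw)
  have hQx : x ∈ Q t := by
    rw [hQdef]
    simp
  have hQdisj : ∀ s s', s ≠ s' → Disjoint (Q s) (Q s') := by
    intro s s' hss
    rw [hQdef, Finset.disjoint_left]
    intro y hy hy'
    simp only [Finset.mem_union] at hy hy'
    rcases hy with (hy | hy) | hy <;> rcases hy' with (hy' | hy') | hy'
    · split at hy
      · split at hy'
        · rename_i h1 h2; exact hss (h1.trans h2.symm)
        · exact absurd hy' (Finset.notMem_empty y)
      · exact absurd hy (Finset.notMem_empty y)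
    · split at hy
      · exact hPAx s' ((Finset.mem_singleton.mp hy) ▸ hy')
      · exact absurd hy (Finset.notMem_empty y)
    · split at hy
      · exact hPBx s' ((Finset.mem_singleton.mp hy) ▸ hy')
      · exact absurd hy (Finset.notMem_empty y)
    · split at hy'
      · exact hPAx s ((Finset.mem_singleton.mp hy') ▸ hy)
      · exact absurd hy' (Finset.notMem_empty y)
    · exact Finset.disjoint_left.mp (hPA4 s s' hss) hy hy'
    · exact Finset.disjoint_left.mp (hPAB s s') hy hy'
    · split at hy'
      · exact hPBx s ((Finset.mem_singleton.mp hy') ▸ hy)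
      · exact absurd hy' (Finset.notMem_empty y)
    · exact Finset.disjoint_left.mp (hPAB s' s) hy' hy
    · exact Finset.disjoint_left.mp (hPB4 s s' hss) hy hy'
  have hQcard : ∀ s, (Q s).card = cnt s := by
    intro s
    rw [hQdef]
    have hd1 : Disjoint ((if s = t then ({x} : Finset V) else ∅) ∪ PA s) (PB s) := by
      rw [Finset.disjoint_union_left]
      constructor
      · split
        · exact Finset.disjoint_left.mpr fun y hy hy' =>
            hPBx s ((Finset.mem_singleton.mp hy) ▸ hy')
        · exact Finset.disjoint_empty_left _
      · exact hPAB s s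
    have hd2 : Disjoint (if s = t then ({x} : Finset V) else ∅) (PA s) := by
      split
      · exact Finset.disjoint_left.mpr fun y hy hy' =>
          hPAx s ((Finset.mem_singleton.mp hy) ▸ hy')
      · exact Finset.disjoint_empty_left _
    rw [Finset.card_union_of_disjoint hd1, Finset.card_union_of_disjoint hd2,
      hPA3', hPB3']
    by_cases hst : s = t
    · subst hst
      simp [hgAdef, hgBdef]
      omega
    · simp only [hgAdef, hgBdef, if_neg hst, Finset.card_empty]
      by_cases hsS : s ∈ S <;> simp [hsS]
  have hQcover : ∀ v, v ≠ w → ∃ s, v ∈ Q s := by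
    intro v hv
    by_cases hvx : v = x
    · exact ⟨t, hvx ▸ hQx⟩
    · have hvAB : v ∈ A ∪ B := by
        rw [hABunion]
        exact Finset.mem_erase.mpr ⟨hv, Finset.mem_univ v⟩
      rcases Finset.mem_union.mp hvAB with hvA | hvB
      · obtain ⟨s, hs⟩ := hPA5 v (Finset.mem_erase.mpr ⟨hvx, hvA⟩)
        exact ⟨s, by rw [hQdef]; simp only [Finset.mem_union]; tauto⟩
      · obtain ⟨s, hs⟩ := hPB5 v hvB
        exact ⟨s, by rw [hQdef]; simp only [Finset.mem_union]; tauto⟩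
  have hQside : ∀ s, s ≠ t → (Q s ⊆ A ∨ Q s ⊆ B) := by
    intro s hst
    by_cases hsS : s ∈ S
    · left
      have hB0 : PB s = ∅ := by
        rw [← Finset.card_eq_zero, hPB3']
        simp [hgBdef, hst, hsS]
      intro y hy
      rw [hQdef] at hy
      simp only [Finset.mem_union, if_neg hst, hB0] at hy
      rcases hy with (hy | hy) | hy
      · exact absurd hy (Finset.notMem_empty y)
      · exact Finset.mem_of_mem_erase (hPA1 s hy)
      · exact absurd hy (Finset.notMem_empty y)
    · right
      have hA0 : PA s = ∅ := by
        rw [← Finset.card_eq_zero, hPA3']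
        simp [hgAdef, hst, hsS]
      intro y hy
      rw [hQdef] at hy
      simp only [Finset.mem_union, if_neg hst, hA0] at hy
      rcases hy with (hy | hy) | hy
      · exact absurd hy (Finset.notMem_empty y)
      · exact absurd hy (Finset.notMem_empty y)
      · exact hPB1 s hy
  -- the assignment
  set C : V → Option τ := fun v => if h : ∃ s, v ∈ Q s then some h.choose else none
    with hCdef
  have hCmem : ∀ v s, C v = some s ↔ v ∈ Q s := by
    intro v s
    constructor
    · intro hv
      simp only [hCdef] at hv
      by_cases h : ∃ s', v ∈ Q s'
      · rw [dif_pos h] at hv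
        have := h.choose_spec
        rwa [Option.some_inj.mp hv] at this
      · rw [dif_neg h] at hv
        exact absurd hv (by simp)
    · intro hv
      have h : ∃ s', v ∈ Q s' := ⟨s, hv⟩
      have hch : h.choose = s := by
        by_contra hne
        exact Finset.disjoint_left.mp (hQdisj _ _ hne) h.choose_spec hv
      simp only [hCdef]
      rw [dif_pos h, hch]
  have hCw : C w = none := by
    simp only [hCdef]
    rw [dif_neg]
    intro ⟨s, hs⟩
    exact hQw s hs
  have hCx : C x = some t := (hCmem x t).mpr hQx
  have hCocc : ∀ v, v ≠ w → ∃ s, C v = some s := by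
    intro v hv
    obtain ⟨s, hs⟩ := hQcover v hv
    exact ⟨s, (hCmem v s).mpr hs⟩
  refine ⟨C, ?_, ?_⟩
  · -- counts
    intro s
    have : Finset.univ.filter (fun v => C v = some s) = Q s := by
      ext v
      simp only [Finset.mem_filter, Finset.mem_univ, true_and]
      exact hCmem v s
    rw [← hQcard s]
    unfold countType
    exact congrArg Finset.card this
  · -- equilibrium
    intro u w' hu hw'
    have hw'w : w' = w := by
      by_contra h
      obtain ⟨s, hs⟩ := hCocc w' h
      rw [hs] at hw'
      exact Option.some_ne_none s hw'
    rw [hw'w]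
    have huw : u ≠ w := by
      intro h
      rw [h, hCw] at hu
      simp at hu
    obtain ⟨s, hCu⟩ := hCocc u huw
    have hAdjw : ∀ y, G.Adj w y ↔ y = x :=
      fun y => ⟨fun h => huniq y h.symm, fun h => h ▸ hxw.symm⟩
    by_cases hux : u = x
    · have hocc0 : occNbrs G (move C u w) w = ∅ := by
        ext y
        simp only [occNbrs, Finset.mem_filter, Finset.mem_univ, true_and,
          Finset.notMem_empty, iff_false, not_and]
        intro hadj
        rw [hAdjw y] at hadj
        subst hadj
        simp [move, hxwne, hux]
      have hmv : move C u w w = some s := by simp [move, hCu]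
      rw [util_some G (move C u w) w s hmv, hocc0]
      simp only [Finset.card_empty, if_pos rfl]
      exact util_nonneg G C u
    · have hxu : x ≠ u := fun h => hux h.symm
      have hCu' : move C u w w = some s := by simp [move, hCu]
      have hCx' : move C u w x = some t := by
        simp [move, hxwne, hxu, hCx]
      have hoccw : occNbrs G (move C u w) w = {x} := by
        ext y
        simp only [occNbrs, Finset.mem_filter, Finset.mem_univ, true_and,
          Finset.mem_singleton]
        constructor
        · rintro ⟨hadj, -⟩
          exact (hAdjw y).mp hadj
        · intro hy
          rw [hy]
          exact ⟨(hAdjw x).mpr rfl, by rw [hCx']; rfl⟩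
      rw [util_some G (move C u w) w s hCu', hoccw]
      simp only [Finset.card_singleton]
      rw [if_neg (by norm_num)]
      by_cases hst : s = t
      · have hdiff0 : diffNbrs G (move C u w) w s = ∅ := by
          ext y
          simp only [diffNbrs, Finset.mem_filter, Finset.mem_univ, true_and,
            Finset.notMem_empty, iff_false, not_and]
          intro hadj
          rw [hAdjw y] at hadj
          subst hadj
          rintro ⟨s', hs', hne⟩
          rw [hCx'] at hs'
          exact hne ((Option.some_inj.mp hs').symm.trans hst.symm)
        rw [hdiff0]
        simpa using util_nonneg G C u
      · -- u has utility 1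
        have hnbrw : ∀ y, G.Adj u y → y ≠ w := by
          intro y hy hyw
          exact hux (huniq u (hyw ▸ hy))
        have hoccu : occNbrs G C u = Finset.univ.filter (fun y => G.Adj u y) := by
          ext y
          simp only [occNbrs, Finset.mem_filter, Finset.mem_univ, true_and]
          refine ⟨fun h => h.1, fun h => ⟨h, ?_⟩⟩
          obtain ⟨s', hs'⟩ := hCocc y (hnbrw y h)
          rw [hs']
          rfl
        have hne0 : (occNbrs G C u).card ≠ 0 := by
          obtain ⟨y, hy⟩ := exists_adj hconn huw
          rw [Finset.card_ne_zero, hoccu]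
          exact ⟨y, Finset.mem_filter.mpr ⟨Finset.mem_univ y, hy⟩⟩
        have hdiffu : diffNbrs G C u s = occNbrs G C u := by
          apply Finset.Subset.antisymm (diffNbrs_subset G C u s)
          intro y hy
          rw [hoccu, Finset.mem_filter] at hy
          obtain ⟨s', hs'⟩ := hCocc y (hnbrw y hy.2)
          simp only [diffNbrs, Finset.mem_filter, Finset.mem_univ, true_and]
          refine ⟨hy.2, s', hs', ?_⟩
          intro hss
          subst hss
          have hyQ : y ∈ Q s' := (hCmem y s').mp hs'
          have huQ : u ∈ Q s' := (hCmem u s').mp hCu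
          rcases hQside s' hst with hside | hside
          · exact hAindep u y (hside huQ) (hside hyQ) hy.2
          · exact hBindep u y (hside huQ) (hside hyQ) hy.2
        have hutil1 : util G C u = 1 := by
          rw [util_some G C u s hCu, if_neg hne0, hdiffu]
          rw [div_self]
          exact_mod_cast hne0
        rw [hutil1]
        have hd1 : (diffNbrs G (move C u w) w s).card ≤ 1 := by
          have := Finset.card_le_card (diffNbrs_subset G (move C u w) w s)
          rw [hoccw] at this
          simpa using this
        have : ((diffNbrs G (move C u w) w s).card : ℚ) ≤ 1 := by exact_mod_cast hd1
        simpa using this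
end

section
/- For every k ≥ 2, the price of anarchy of any diversity-seeking jump game with n strategic agents of k symmetric types (each of size n/k) and no stubborn agents is at most k/(k−1): every pure Nash equilibrium has social welfare at least n(k−1)/k. -/
open Finset

variable {V τ : Type}

lemma div_le_div_of_nonneg_left' {a b c : ℚ} (ha : 0 ≤ a) (hc : 0 < c) (hb : 0 < b)
    (h : b ≤ c) : a / c ≤ a / b := by
  gcongr

section Aux

variable {V τ : Type} [Fintype V] [DecidableEq V]

open Classical

lemma mem_occNbrs {G : SimpleGraph V} {C : V → Option τ} {v u : V} :
    u ∈ occNbrs G C v ↔ G.Adj v u ∧ (C u).isSome := by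
  simp [occNbrs]

lemma mem_diffNbrs {G : SimpleGraph V} {C : V → Option τ} {v u : V} {t : τ} :
    u ∈ diffNbrs G C v t ↔ G.Adj v u ∧ ∃ s, C u = some s ∧ s ≠ t := by
  simp [diffNbrs]

open Classical in
noncomputable def sameNbrs (G : SimpleGraph V) (C : V → Option τ) (v : V) (t : τ) :
    Finset V :=
  Finset.univ.filter (fun u => G.Adj v u ∧ C u = some t)

lemma mem_sameNbrs {G : SimpleGraph V} {C : V → Option τ} {v u : V} {t : τ} :
    u ∈ sameNbrs G C v t ↔ G.Adj v u ∧ C u = some t := by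
  simp [sameNbrs]

lemma boundary {G : SimpleGraph V} {C : V → Option τ} :
    ∀ {a b : V}, G.Walk a b → (C a).isSome → C b = none →
      ∃ u w, G.Adj u w ∧ (C u).isSome ∧ C w = none
  | a, _, SimpleGraph.Walk.nil, ha, hb => by rw [hb] at ha; simp at ha
  | a, b, @SimpleGraph.Walk.cons _ _ _ c _ h p, ha, hb => by
      by_cases hc : (C c).isSome
      · exact boundary p hc hb
      · exact ⟨a, c, h, ha, Option.not_isSome_iff_eq_none.mp hc⟩

lemma sameNbrs_subset {G : SimpleGraph V} {C : V → Option τ} {w : V} {t : τ} :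
    sameNbrs G C w t ⊆ occNbrs G C w := by
  intro x hx
  rw [mem_sameNbrs] at hx
  rw [mem_occNbrs]
  exact ⟨hx.1, by simp [hx.2]⟩

lemma diff_eq_sdiff {G : SimpleGraph V} {C : V → Option τ} {w : V} {t : τ} :
    diffNbrs G C w t = occNbrs G C w \ sameNbrs G C w t := by
  ext x
  rw [Finset.mem_sdiff, mem_diffNbrs, mem_occNbrs, mem_sameNbrs]
  constructor
  · rintro ⟨ha, s, hs, hst⟩
    exact ⟨⟨ha, by simp [hs]⟩, fun h => hst (by rw [hs] at h; exact Option.some_injective _ h.2)⟩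
  · rintro ⟨⟨ha, hs⟩, hns⟩
    rcases Option.isSome_iff_exists.mp hs with ⟨s, hcs⟩
    exact ⟨ha, s, hcs, fun h => hns ⟨ha, by rw [hcs, h]⟩⟩

lemma card_diff_eq {G : SimpleGraph V} {C : V → Option τ} {w : V} {t : τ} :
    (diffNbrs G C w t).card = (occNbrs G C w).card - (sameNbrs G C w t).card := by
  rw [diff_eq_sdiff, Finset.card_sdiff_of_subset sameNbrs_subset]

/-- Occupied neighbors of `w` after the agent at `u` jumps to `w`. -/
lemma occNbrs_move {G : SimpleGraph V} {C : V → Option τ} {u w : V}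
    (huw : u ≠ w) :
    occNbrs G (move C u w) w = (occNbrs G C w).erase u := by
  ext x
  rw [Finset.mem_erase, mem_occNbrs, mem_occNbrs]
  by_cases hxu : x = u
  · subst hxu
    simp [move, huw]
  · by_cases hxw : x = w
    · subst hxw
      simp [G.irrefl]
    · simp [move, hxw, hxu]

lemma diffNbrs_move {G : SimpleGraph V} {C : V → Option τ} {u w : V} {t : τ}
    (huw : u ≠ w) (hu : C u = some t) :
    diffNbrs G (move C u w) w t = diffNbrs G C w t := by
  ext x
  rw [mem_diffNbrs, mem_diffNbrs]
  by_cases hxu : x = u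
  · subst hxu
    simp only [move, if_neg huw, if_pos rfl, hu]
    constructor
    · rintro ⟨_, s, hs, _⟩; cases hs
    · rintro ⟨ha, s, hs, hst⟩
      exact (hst (Option.some_injective _ hs).symm).elim
  · by_cases hxw : x = w
    · subst hxw
      simp [G.irrefl]
    · simp [move, hxw, hxu]

/-- In equilibrium, every agent of type `t` gets at least `(d - c t)/d` where `d` is the
number of occupied neighbors of the empty node `w` and `c t` those of type `t`. -/
lemma agent_lb {G : SimpleGraph V} {C : V → Option τ} (heq : IsEquil G C)
    {w : V} (hw : C w = none) (hd : 1 ≤ (occNbrs G C w).card)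
    {u : V} {t : τ} (hu : C u = some t) :
    (((occNbrs G C w).card : ℚ) - ((sameNbrs G C w t).card : ℚ)) / ((occNbrs G C w).card : ℚ)
      ≤ util G C u := by
  have huw : u ≠ w := fun h => by rw [h, hw] at hu; cases hu
  have key := heq u w (by simp [hu]) hw
  set d := (occNbrs G C w).card with hdd
  set ct := (sameNbrs G C w t).card with hct
  have hctd : ct ≤ d := Finset.card_le_card sameNbrs_subset
  have hD : (diffNbrs G C w t).card = d - ct := card_diff_eq
  have hDq : ((diffNbrs G C w t).card : ℚ) = (d : ℚ) - (ct : ℚ) := by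
    rw [hD, Nat.cast_sub hctd]
  have hmw : move C u w w = some t := by simp [move, hu]
  have hocc := occNbrs_move (G := G) (C := C) huw
  have hdiff := diffNbrs_move (G := G) huw hu
  have hutil : util G (move C u w) w =
      if ((occNbrs G C w).erase u).card = 0 then 0
      else ((diffNbrs G C w t).card : ℚ) / (((occNbrs G C w).erase u).card : ℚ) := by
    simp only [util, hmw, hocc, hdiff]
  refine le_trans ?_ key
  rw [hutil]
  by_cases hmem : u ∈ occNbrs G C w
  · have hus : u ∈ sameNbrs G C w t := by
      rw [mem_sameNbrs]; exact ⟨(mem_occNbrs.mp hmem).1, hu⟩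
    have hct1 : 1 ≤ ct := Finset.card_pos.mpr ⟨u, hus⟩
    have hcard : ((occNbrs G C w).erase u).card = d - 1 :=
      Finset.card_erase_of_mem hmem
    rw [hcard]
    by_cases hz : d - 1 = 0
    · -- then d = 1 and ct = 1, so LHS = 0
      have hd1 : d = 1 := le_antisymm (by omega) hd
      have hct1' : ct = 1 := le_antisymm (hd1 ▸ hctd) hct1
      rw [if_pos hz, hd1, hct1']
      norm_num
    · rw [if_neg hz, hDq]
      have hd0 : (0 : ℚ) < d := by exact_mod_cast hd
      have hdm0 : (0 : ℚ) < ((d - 1 : ℕ) : ℚ) := by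
        have : 1 ≤ d - 1 := by omega
        exact_mod_cast this
      have hnum : (0 : ℚ) ≤ (d : ℚ) - (ct : ℚ) := by
        have h : (ct : ℚ) ≤ (d : ℚ) := by exact_mod_cast hctd
        linarith
      have hle : ((d - 1 : ℕ) : ℚ) ≤ (d : ℚ) := by
        have : d - 1 ≤ d := Nat.sub_le d 1
        exact_mod_cast this
      exact div_le_div_of_nonneg_left' hnum hd0 hdm0 hle
  · rw [Finset.erase_eq_of_notMem hmem]
    rw [if_neg (by omega), hDq]

end Aux

/-- With k ≥ 2 symmetric types of size n/k each, every pure Nash equilibrium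
has social welfare at least n(k−1)/k; hence the price of anarchy is at most k/(k−1). -/
theorem stmt6 {V τ : Type} [Fintype V] [DecidableEq V] [Fintype τ]
    (G : SimpleGraph V) (hconn : G.Connected)
    (hk : 2 ≤ Fintype.card τ)
    (C : V → Option τ) (q : ℕ) (hq : 1 ≤ q)
    (hcnt : ∀ t : τ, countType C t = q)
    (hempty : ∃ v, C v = none)
    (heq : IsEquil G C) :
    ((Fintype.card τ * q : ℕ) : ℚ) * ((Fintype.card τ : ℚ) - 1) / (Fintype.card τ : ℚ)
      ≤ SW G C := by
  classical
  -- find an empty node adjacent to an occupied node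
  have hτ : Nonempty τ := Fintype.card_pos_iff.mp (by omega)
  obtain ⟨t0⟩ := hτ
  have hocc0 : ∃ v, C v = some t0 := by
    have h := hcnt t0
    simp only [countType] at h
    have hpos : 0 < (Finset.univ.filter (fun v => C v = some t0)).card := by omega
    obtain ⟨v, hv⟩ := Finset.card_pos.mp hpos
    exact ⟨v, (Finset.mem_filter.mp hv).2⟩
  obtain ⟨v1, hv1⟩ := hocc0
  obtain ⟨v0, hv0⟩ := hempty
  obtain ⟨p⟩ := hconn.preconnected v1 v0
  obtain ⟨u0, w, hadj, hu0, hw⟩ := boundary p (by simp [hv1]) hv0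
  have hd : 1 ≤ (occNbrs G C w).card :=
    Finset.card_pos.mpr ⟨u0, mem_occNbrs.mpr ⟨hadj.symm, hu0⟩⟩
  set d : ℕ := (occNbrs G C w).card with hdd
  set k : ℕ := Fintype.card τ with hkk
  set g : τ → ℚ := fun t => ((d : ℚ) - ((sameNbrs G C w t).card : ℚ)) / (d : ℚ) with hg
  -- the per-agent lower bound
  have hstep : ∀ v, (∑ t, if C v = some t then g t else 0) ≤ util G C v := by
    intro v
    rcases hv : C v with _ | t
    · have h0 : (∑ t, if (none : Option τ) = some t then g t else 0) = 0 := by simp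
      rw [h0]
      rw [util, hv]
    · have h1 : (∑ t', if (some t : Option τ) = some t' then g t' else 0) = g t := by
        simp
      rw [h1]
      exact agent_lb heq hw hd hv
  have hSW : ∑ v, (∑ t, if C v = some t then g t else 0) ≤ SW G C :=
    Finset.sum_le_sum (fun v _ => hstep v)
  rw [Finset.sum_comm] at hSW
  -- each inner sum equals q * g t
  have hinner : ∀ t : τ, (∑ v, if C v = some t then g t else 0) = (q : ℚ) * g t := by
    intro t
    rw [← Finset.sum_filter, Finset.sum_const, nsmul_eq_mul]
    congr 1
    have h := hcnt t
    simp only [countType] at h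
    exact_mod_cast h
  rw [Finset.sum_congr rfl (fun t _ => hinner t), ← Finset.mul_sum] at hSW
  -- ∑ t, card (sameNbrs) = d
  have hpart : occNbrs G C w = Finset.univ.biUnion (fun t => sameNbrs G C w t) := by
    ext x
    simp only [Finset.mem_biUnion, Finset.mem_univ, true_and, mem_occNbrs, mem_sameNbrs,
      Option.isSome_iff_exists]
    tauto
  have hsum : d = ∑ t, (sameNbrs G C w t).card := by
    rw [hdd, hpart]
    refine Finset.card_biUnion ?_
    intro t1 _ t2 _ hne
    simp only [Function.onFun, Finset.disjoint_left]
    intro x hx1 hx2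
    rw [mem_sameNbrs] at hx1 hx2
    exact hne (Option.some_injective _ (hx1.2.symm.trans hx2.2))
  have hd0 : ((d : ℚ)) ≠ 0 := by
    have : (0 : ℚ) < d := by exact_mod_cast hd
    linarith
  have hgsum : (∑ t, g t) = (k : ℚ) - 1 := by
    simp only [hg]
    rw [← Finset.sum_div, Finset.sum_sub_distrib, Finset.sum_const, Finset.card_univ,
      nsmul_eq_mul]
    have hcs : (∑ t, ((sameNbrs G C w t).card : ℚ)) = (d : ℚ) := by
      rw [← Nat.cast_sum]
      exact_mod_cast hsum.symm
    rw [hcs, ← hkk]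
    field_simp
  rw [hgsum] at hSW
  have hk0 : ((k : ℚ)) ≠ 0 := by
    have : (0 : ℚ) < k := by exact_mod_cast (by omega : 0 < k)
    linarith
  have htarget : ((k * q : ℕ) : ℚ) * ((k : ℚ) - 1) / (k : ℚ) = (q : ℚ) * ((k : ℚ) - 1) := by
    push_cast
    field_simp
  calc ((k * q : ℕ) : ℚ) * ((k : ℚ) - 1) / (k : ℚ)
      = (q : ℚ) * ((k : ℚ) - 1) := htarget
    _ ≤ SW G C := hSW
end

section
/- There is a diversity-seeking jump game with k = 2 types whose price of stability is at least 65/62: on a specific 7-node topology with 2 red and 4 blue agents, the optimal social welfare is 65/12 but it is not attained at any equilibrium, and the best equilibrium has social welfare 62/12. -/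
open Finset

variable {V τ : Type}

/-! ### Auxiliary computable (natural-number) versions -/

def adjB : Fin 7 → Fin 7 → Bool := fun u v =>
  ([(0,1),(0,2),(0,5),(0,6),(1,2),(1,4),(2,3)] : List (Fin 7 × Fin 7)).contains (u, v) ||
  ([(0,1),(0,2),(0,5),(0,6),(1,2),(1,4),(2,3)] : List (Fin 7 × Fin 7)).contains (v, u)

def myG : SimpleGraph (Fin 7) where
  Adj u v := adjB u v = true
  symm := by
    have h : ∀ u v : Fin 7, adjB u v = true → adjB v u = true := by decide
    exact ⟨fun u v => h u v⟩
  loopless := by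
    have h : ∀ u : Fin 7, ¬ adjB u u = true := by decide
    exact ⟨fun u => h u⟩

def occN (C : Fin 7 → Option Bool) (v : Fin 7) : ℕ :=
  (Finset.univ.filter (fun u => adjB v u = true ∧ (C u).isSome = true)).card

def diffN (C : Fin 7 → Option Bool) (v : Fin 7) (t : Bool) : ℕ :=
  (Finset.univ.filter (fun u => adjB v u = true ∧ ∃ s, C u = some s ∧ s ≠ t)).card

def utilN (C : Fin 7 → Option Bool) (v : Fin 7) : ℕ :=
  match C v with
  | none => 0
  | some t => diffN C v t * (420 / occN C v)

def SWN (C : Fin 7 → Option Bool) : ℕ := ∑ v, utilN C v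

lemma occ_card (C : Fin 7 → Option Bool) (v : Fin 7) :
    (occNbrs myG C v).card = occN C v := by
  unfold occNbrs occN
  congr 1
  ext u
  simp only [Finset.mem_filter]
  exact Iff.rfl

lemma diff_card (C : Fin 7 → Option Bool) (v : Fin 7) (t : Bool) :
    (diffNbrs myG C v t).card = diffN C v t := by
  unfold diffNbrs diffN
  congr 1
  ext u
  simp only [Finset.mem_filter]
  exact Iff.rfl

lemma occN_le6 (C : Fin 7 → Option Bool) (v : Fin 7) : occN C v ≤ 6 := by
  have hsub : (Finset.univ.filter (fun u => adjB v u = true ∧ (C u).isSome = true))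
      ⊆ Finset.univ.erase v := by
    intro u hu
    simp only [Finset.mem_filter] at hu
    have hvn' : ∀ x : Fin 7, adjB x x = false := by decide
    have hvn : adjB v v = false := hvn' v
    refine Finset.mem_erase.mpr ⟨?_, Finset.mem_univ u⟩
    rintro rfl
    rw [hvn] at hu
    exact Bool.false_ne_true hu.2.1
  calc occN C v ≤ (Finset.univ.erase v).card := Finset.card_le_card hsub
    _ = 6 := by rw [Finset.card_erase_of_mem (Finset.mem_univ v)]; rfl

lemma util_eq (C : Fin 7 → Option Bool) (v : Fin 7) :
    util myG C v = (utilN C v : ℚ) / 420 := by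
  unfold util utilN
  cases h : C v with
  | none => simp
  | some t =>
      simp only []
      rw [occ_card, diff_card]
      by_cases ho : occN C v = 0
      · simp [ho]
      · have hpos : 0 < occN C v := Nat.pos_of_ne_zero ho
        have h6 : occN C v ≤ 6 := occN_le6 C v
        have hdvd : occN C v ∣ 420 := by interval_cases h : (occN C v) <;> norm_num
        have hQ : ((occN C v : ℚ)) ≠ 0 := by exact_mod_cast ho
        rw [if_neg ho, Nat.cast_mul, Nat.cast_div hdvd hQ]
        field_simp
        ring

lemma SW_eq (C : Fin 7 → Option Bool) : SW myG C = (SWN C : ℚ) / 420 := by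
  unfold SW SWN
  rw [Finset.sum_congr rfl (fun v _ => util_eq C v), ← Finset.sum_div, Nat.cast_sum]

def countTypeB (C : Fin 7 → Option Bool) (t : Bool) : ℕ :=
  (Finset.univ.filter (fun v => C v = some t)).card

lemma countType_eq (C : Fin 7 → Option Bool) (t : Bool) :
    countType C t = countTypeB C t := by
  unfold countType countTypeB
  congr 1
  ext v
  simp only [Finset.mem_filter]

abbrev IsEquilN (C : Fin 7 → Option Bool) : Prop :=
  ∀ u w : Fin 7, (C u).isSome = true → C w = none →
    utilN (move C u w) w ≤ utilN C u

lemma div420_le_iff (a b : ℕ) : ((a : ℚ) / 420 ≤ (b : ℚ) / 420) ↔ a ≤ b := by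
  rw [div_le_div_iff₀ (by norm_num) (by norm_num)]
  constructor
  · intro h
    have : (a : ℚ) ≤ b := le_of_mul_le_mul_right h (by norm_num)
    exact_mod_cast this
  · intro h
    have : (a : ℚ) ≤ b := by exact_mod_cast h
    nlinarith

lemma isEquil_iff (C : Fin 7 → Option Bool) : IsEquil myG C ↔ IsEquilN C := by
  unfold IsEquil IsEquilN
  constructor
  · intro h u w hu hw
    have := h u w hu hw
    rw [util_eq, util_eq, div420_le_iff] at this
    exact this
  · intro h u w hu hw
    rw [util_eq, util_eq, div420_le_iff]
    exact h u w hu hw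

lemma eta7 (C : Fin 7 → Option Bool) : C = ![C 0, C 1, C 2, C 3, C 4, C 5, C 6] := by
  funext i; fin_cases i <;> rfl

set_option maxRecDepth 10000 in
set_option maxHeartbeats 4000000 in
lemma key1 : ∀ a b c d e f g : Option Bool,
    countTypeB ![a,b,c,d,e,f,g] true = 2 → countTypeB ![a,b,c,d,e,f,g] false = 4 →
    SWN ![a,b,c,d,e,f,g] ≤ 2275 := by decide

set_option maxRecDepth 10000 in
set_option maxHeartbeats 4000000 in
set_option synthInstance.maxHeartbeats 2000000 in
set_option synthInstance.maxSize 5000 in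
lemma key3 : ∀ a b c d e f g : Option Bool,
    countTypeB ![a,b,c,d,e,f,g] true = 2 → countTypeB ![a,b,c,d,e,f,g] false = 4 →
    IsEquilN ![a,b,c,d,e,f,g] → SWN ![a,b,c,d,e,f,g] ≤ 2170 := by decide

/-- There is a diversity-seeking jump game with two types (2 red = `true`,
4 blue = `false` agents) on a 7-node topology whose optimal social welfare is 65/12,
while the best equilibrium has social welfare 62/12; hence the price of stability is at
least 65/62. -/
theorem stmt12 :
    ∃ G : SimpleGraph (Fin 7),
      (∀ C : Fin 7 → Option Bool, countType C true = 2 → countType C false = 4 →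
          SW G C ≤ 65 / 12) ∧
      (∃ C : Fin 7 → Option Bool, countType C true = 2 ∧ countType C false = 4 ∧
          SW G C = 65 / 12) ∧
      (∀ C : Fin 7 → Option Bool, countType C true = 2 → countType C false = 4 →
          IsEquil G C → SW G C ≤ 62 / 12) ∧
      (∃ C : Fin 7 → Option Bool, countType C true = 2 ∧ countType C false = 4 ∧
          IsEquil G C ∧ SW G C = 62 / 12) := by
  refine ⟨myG, ?_, ?_, ?_, ?_⟩
  · intro C h1 h2
    rw [countType_eq] at h1 h2
    rw [SW_eq]
    have key : SWN C ≤ 2275 := by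
      have := key1 (C 0) (C 1) (C 2) (C 3) (C 4) (C 5) (C 6)
      rw [← eta7 C] at this
      exact this h1 h2
    have hc : (SWN C : ℚ) ≤ 2275 := by exact_mod_cast key
    linarith
  · refine ⟨![some true, some false, some true, some false, none, some false, some false],
      ?_, ?_, ?_⟩
    · rw [countType_eq]; decide
    · rw [countType_eq]; decide
    · rw [SW_eq]
      have : SWN ![some true, some false, some true, some false, none, some false,
          some false] = 2275 := by decide
      rw [this]; norm_num
  · intro C h1 h2 heq
    rw [countType_eq] at h1 h2
    rw [isEquil_iff] at heq
    rw [SW_eq]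
    have key : SWN C ≤ 2170 := by
      have := key3 (C 0) (C 1) (C 2) (C 3) (C 4) (C 5) (C 6)
      rw [← eta7 C] at this
      exact this h1 h2 heq
    have hc : (SWN C : ℚ) ≤ 2170 := by exact_mod_cast key
    linarith
  · refine ⟨![some true, some false, some false, some true, none, some false, some false],
      ?_, ?_, ?_, ?_⟩
    · rw [countType_eq]; decide
    · rw [countType_eq]; decide
    · rw [isEquil_iff]; decide
    · rw [SW_eq]
      have : SWN ![some true, some false, some false, some true, none, some false,
          some false] = 2170 := by decide
      rw [this]; norm_num
end
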